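/- Let h > 0 and N ≥ 1, and let V be the potential of the anti-ferromagnetic mean-field XY model. If 0 < h < 1 then the range of V/N is contained in the interval [−h²/2, h + 1/2], and if h ≥ 1 then it is contained in [−h + 1/2, h + 1/2]. Moreover the value h + 1/2 is attained (at the configuration with all θⱼ = −π/2). -/

import Mathlib

/-- The XY potential `V(θ) = (1/(2N)) ∑_{i,j} cos(θᵢ - θⱼ) - h ∑ᵢ sin θᵢ`. -/
noncomputable def Vxy (N : ℕ) (h : ℝ) (θ : Fin N → ℝ) : ℝ :=
  (1 / (2 * (N : ℝ))) * ∑ i, ∑ j, Real.cos (θ i - θ j) - h * ∑ i, Real.sin (θ i)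

/-- For `h > 0`: if `h < 1` the range of `V/N` lies in `[-h²/2, h + 1/2]`, if
`h ≥ 1` it lies in `[-h + 1/2, h + 1/2]`, and the value `h + 1/2` is attained
at the configuration with all `θⱼ = -π/2`. -/
theorem stmt9 (N : ℕ) (hN : 1 ≤ N) (h : ℝ) (hh : 0 < h) :
    (∀ θ : Fin N → ℝ,
      (h < 1 → Vxy N h θ / N ∈ Set.Icc (-h ^ 2 / 2) (h + 1 / 2)) ∧
      (1 ≤ h → Vxy N h θ / N ∈ Set.Icc (-h + 1 / 2) (h + 1 / 2))) ∧
    Vxy N h (fun _ => -(Real.pi / 2)) / N = h + 1 / 2 := by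
  have hn : (0 : ℝ) < (N : ℝ) := by exact_mod_cast Nat.lt_of_lt_of_le Nat.zero_lt_one hN
  constructor
  · intro θ
    set C := ∑ i, Real.cos (θ i) with hCdef
    set S := ∑ i, Real.sin (θ i) with hSdef
    have key : ∑ i, ∑ j, Real.cos (θ i - θ j) = C ^ 2 + S ^ 2 := by
      simp_rw [Real.cos_sub, Finset.sum_add_distrib, ← Finset.mul_sum, ← Finset.sum_mul,
        sq]
      rfl
    have hVS : Vxy N h θ = (1 / (2 * (N : ℝ))) * (C ^ 2 + S ^ 2) - h * S := by
      rw [Vxy, key]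
    -- bound on |S|
    have hSub : S ≤ (N : ℝ) := by
      calc S ≤ ∑ _i : Fin N, (1 : ℝ) :=
            Finset.sum_le_sum fun i _ => Real.sin_le_one _
        _ = (N : ℝ) := by simp
    have hSlb : -(N : ℝ) ≤ S := by
      calc -(N : ℝ) = ∑ _i : Fin N, (-1 : ℝ) := by simp
        _ ≤ S := Finset.sum_le_sum fun i _ => Real.neg_one_le_sin _
    -- bound C² + S² ≤ N²
    have hCS : C ^ 2 + S ^ 2 ≤ (N : ℝ) ^ 2 := by
      have hz : ‖∑ i, Complex.exp (θ i * Complex.I)‖ ≤ (N : ℝ) := by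
        calc ‖∑ i, Complex.exp (θ i * Complex.I)‖
            ≤ ∑ i, ‖Complex.exp (θ i * Complex.I)‖ :=
              norm_sum_le _ _
          _ = (N : ℝ) := by
              simp [Complex.norm_exp_ofReal_mul_I]
      have hre : (∑ i, Complex.exp (θ i * Complex.I)).re = C := by
        simp [Complex.exp_ofReal_mul_I_re, hCdef]
      have him : (∑ i, Complex.exp (θ i * Complex.I)).im = S := by
        simp [Complex.exp_ofReal_mul_I_im, hSdef]
      have := Complex.sq_norm (∑ i, Complex.exp (θ i * Complex.I))
      rw [Complex.normSq_apply, hre, him] at this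
      nlinarith [norm_nonneg (∑ i, Complex.exp (θ i * Complex.I))]
    have hupper : Vxy N h θ / N ≤ h + 1 / 2 := by
      rw [hVS, div_le_iff₀ hn]
      have h1 : (1 / (2 * (N : ℝ))) * (C ^ 2 + S ^ 2) ≤ (N : ℝ) / 2 := by
        rw [div_mul_eq_mul_div, one_mul, div_le_div_iff₀ (by linarith) (by norm_num)]
        nlinarith
      nlinarith
    refine ⟨fun h1 => ⟨?_, hupper⟩, fun h1 => ⟨?_, hupper⟩⟩
    · rw [hVS, le_div_iff₀ hn]
      have h2 : (S - (N : ℝ) * h) ^ 2 / (2 * (N : ℝ)) ≥ 0 := by positivity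
      have h3 : (S - (N : ℝ) * h) ^ 2 / (2 * (N : ℝ)) =
          S ^ 2 / (2 * (N : ℝ)) - h * S + (N : ℝ) * h ^ 2 / 2 := by
        field_simp; ring
      have h4 : (1 / (2 * (N : ℝ))) * C ^ 2 ≥ 0 := by positivity
      have h5 : (1 / (2 * (N : ℝ))) * S ^ 2 = S ^ 2 / (2 * (N : ℝ)) := by ring
      nlinarith
    · rw [hVS, le_div_iff₀ hn]
      have h2 : (S - (N : ℝ)) * (S + (N : ℝ) - 2 * (N : ℝ) * h) ≥ 0 := by
        have h2a : (0:ℝ) ≤ (N : ℝ) - S := by linarith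
        have h2b : (0:ℝ) ≤ 2 * (N : ℝ) * h - S - (N : ℝ) := by nlinarith
        nlinarith [mul_nonneg h2a h2b]
      have h4 : (1 / (2 * (N : ℝ))) * C ^ 2 ≥ 0 := by positivity
      have h5 : (1 / (2 * (N : ℝ))) * S ^ 2 = S ^ 2 / (2 * (N : ℝ)) := by ring
      have h6 : S ^ 2 / (2 * (N : ℝ)) - h * S - ((-h + 1 / 2) * (N : ℝ)) =
          (S - (N : ℝ)) * (S + (N : ℝ) - 2 * (N : ℝ) * h) / (2 * (N : ℝ)) := by
        field_simp; ring
      have h7 : (S - (N : ℝ)) * (S + (N : ℝ) - 2 * (N : ℝ) * h) / (2 * (N : ℝ)) ≥ 0 :=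
        div_nonneg h2 (by linarith)
      have h8 : (1 / (2 * (N : ℝ))) * (C ^ 2 + S ^ 2) =
          (1 / (2 * (N : ℝ))) * C ^ 2 + (1 / (2 * (N : ℝ))) * S ^ 2 := by ring
      linarith
  · have : Vxy N h (fun _ => -(Real.pi / 2)) = (N : ℝ) * (h + 1 / 2) := by
      rw [Vxy]
      simp only [sub_self, Real.cos_zero, Real.sin_neg, Real.sin_pi_div_two,
        Finset.sum_const, Finset.card_univ, Fintype.card_fin, nsmul_eq_mul,
        smul_eq_mul, mul_one, mul_neg]
      field_simp
      ring
    rw [this, mul_comm, mul_div_assoc, div_self (ne_of_gt hn), mul_one]
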